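/- Let Q = I − βP with P ≥ 0 entrywise with zero diagonal, β ≥ 0, ω ∈ (0,1], and let P_max = max_u ||P e_u||_1 with β·P_max < 1. If r ≥ 0 entrywise and r' = r − ω r_u Q e_u, then ||r'||_1 = ||r||_1 − ω r_u (1 − β||P e_u||_1), and in particular ||r'||_1 ≤ ||r||_1 − ω r_u (1 − β P_max). -/
import Mathlib


open Matrix

/-- Exact ℓ1 decrease of one LocalSOR coordinate update:
`‖r'‖₁ = ‖r‖₁ - ω r_u (1 - β‖P e_u‖₁) ≤ ‖r‖₁ - ω r_u (1 - β P_max)`,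
where `P_max = max_u ‖P e_u‖₁`. -/
theorem localSOR_step_decrease (n : ℕ) (P : Matrix (Fin n) (Fin n) ℝ)
    (hP : ∀ i j, 0 ≤ P i j) (hdiag : ∀ i, P i i = 0)
    (β : ℝ) (hβ : 0 ≤ β) (ω : ℝ) (hω0 : 0 < ω) (hω1 : ω ≤ 1)
    (u : Fin n) (Pmax : ℝ)
    (hPmax : Pmax = Finset.univ.sup' ⟨u, Finset.mem_univ u⟩ (fun v => ∑ i, P i v))
    (hβP : β * Pmax < 1)
    (r : Fin n → ℝ) (hr : ∀ i, 0 ≤ r i)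
    (r' : Fin n → ℝ)
    (hr' : r' = r - (ω * r u) • ((1 - β • P) *ᵥ Pi.single u 1)) :
    (∑ i, |r' i|) = (∑ i, |r i|) - ω * r u * (1 - β * ∑ i, P i u) ∧
    (∑ i, |r' i|) ≤ (∑ i, |r i|) - ω * r u * (1 - β * Pmax) := by
  have hval : ∀ i, r' i = r i - ω * r u * (if i = u then 1 else 0) + ω * r u * (β * P i u) := by
    intro i
    have h1 : ((1 - β • P) *ᵥ Pi.single u 1) i
        = (Pi.single u 1 : Fin n → ℝ) i - β * P i u := by
      rw [Matrix.sub_mulVec, Matrix.one_mulVec, Matrix.smul_mulVec]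
      simp [Matrix.mulVec_single]
    simp only [hr', Pi.sub_apply, Pi.smul_apply, h1, smul_eq_mul]
    by_cases h : i = u <;> simp [h, Pi.single_apply] <;> ring
  have hnn : ∀ i, 0 ≤ r' i := by
    intro i
    rw [hval i]
    by_cases h : i = u
    · simp [h, hdiag]
      nlinarith [hr u, hω1]
    · simp [h]
      exact add_nonneg (hr i)
        (mul_nonneg (mul_nonneg hω0.le (hr u)) (mul_nonneg hβ (hP i u)))
  have habs : (∑ i, |r' i|) = ∑ i, r' i :=
    Finset.sum_congr rfl fun i _ => abs_of_nonneg (hnn i)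
  have habsr : (∑ i, |r i|) = ∑ i, r i :=
    Finset.sum_congr rfl fun i _ => abs_of_nonneg (hr i)
  have hsum : (∑ i, |r' i|) = (∑ i, |r i|) - ω * r u * (1 - β * ∑ i, P i u) := by
    rw [habs, habsr, Finset.sum_congr rfl fun i _ => hval i]
    rw [Finset.sum_add_distrib, Finset.sum_sub_distrib, ← Finset.mul_sum, ← Finset.mul_sum]
    simp only [Finset.sum_ite_eq', Finset.mem_univ, if_true]
    rw [← Finset.mul_sum]
    ring
  refine ⟨hsum, ?_⟩
  rw [hsum]
  have h1 : (∑ i, P i u) ≤ Pmax := by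
    rw [hPmax]
    exact Finset.le_sup' (fun v => ∑ i, P i v) (Finset.mem_univ u)
  have h2 : 0 ≤ ω * r u := mul_nonneg hω0.le (hr u)
  nlinarith [mul_le_mul_of_nonneg_left h1 hβ]
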